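/- Let p be a prime, k ≥ 1, Δ a finite abelian group, and ψ : Δ → (ℤ/p^kℤ)ˣ a group homomorphism whose composition with the reduction map (ℤ/p^kℤ)ˣ → (ℤ/pℤ)ˣ is a nontrivial character of Δ. Then H¹(Δ, (ℤ/p^kℤ)(ψ)) = 0. -/

import Mathlib

/-- The representation of `Δ` on `ℤ/mℤ` where `g` acts as multiplication by `ψ g`. -/
noncomputable def charRep (m : ℕ) {Δ : Type} [Group Δ] (ψ : Δ →* (ZMod m)ˣ) : Rep ℤ Δ :=
  Rep.of ((Module.toModuleEnd ℤ (ZMod m)).toMonoidHom.comp ((Units.coeHom (ZMod m)).comp ψ))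

theorem stmt_14 (p : ℕ) (hp : p.Prime) (k : ℕ) (hk : 1 ≤ k)
    {Δ : Type} [CommGroup Δ] [Finite Δ] (ψ : Δ →* (ZMod (p ^ k))ˣ)
    (hψ : (Units.map (ZMod.castHom (dvd_pow_self p (by omega : k ≠ 0)) (ZMod p)).toMonoidHom).comp
      ψ ≠ 1) :
    Subsingleton (groupCohomology.H1 (charRep (p ^ k) ψ)) := by
  have : NeZero (p ^ k) := ⟨pow_ne_zero _ hp.pos.ne'⟩
  obtain ⟨g₀, hg₀⟩ : ∃ g : Δ,
      (ZMod.castHom (dvd_pow_self p (by omega : k ≠ 0)) (ZMod p)) ((ψ g : ZMod (p ^ k))) ≠ 1 := by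
    by_contra h
    push_neg at h
    exact hψ (MonoidHom.ext fun g => Units.ext (h g))
  set u : ZMod (p ^ k) := (ψ g₀ : ZMod (p ^ k)) - 1 with hu
  have hunit : IsUnit u := by
    have h1 : (ZMod.castHom (dvd_pow_self p (by omega : k ≠ 0)) (ZMod p)) u ≠ 0 := by
      simp only [hu, map_sub, map_one]
      exact sub_ne_zero.2 hg₀
    rw [ZMod.castHom_apply, ← ZMod.natCast_val, Ne, ZMod.natCast_eq_zero_iff] at h1
    have hcop : Nat.Coprime u.val (p ^ k) :=
      Nat.Coprime.pow_right _ ((Nat.coprime_comm.1 (hp.coprime_iff_not_dvd.2 h1)))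
    have := (ZMod.isUnit_iff_coprime u.val (p ^ k)).2 hcop
    rwa [ZMod.natCast_zmod_val] at this
  obtain ⟨v, hv⟩ := hunit
  refine subsingleton_of_forall_eq 0 fun x => ?_
  refine groupCohomology.H1_induction_on x fun f => ?_
  rw [groupCohomology.H1π_eq_zero_iff]
  set F : Δ → ZMod (p ^ k) := f.1 with hF
  have hc : ∀ g h : Δ, F (g * h) = (ψ g : ZMod (p ^ k)) * F h + F g :=
    (groupCohomology.mem_cocycles₁_iff (A := charRep (p ^ k) ψ) f.1).1 f.2
  refine ⟨((v⁻¹ : (ZMod (p ^ k))ˣ) : ZMod (p ^ k)) * F g₀, funext fun g => ?_⟩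
  show (ψ g : ZMod (p ^ k)) * (((v⁻¹ : (ZMod (p ^ k))ˣ) : ZMod (p ^ k)) * F g₀)
      - ((v⁻¹ : (ZMod (p ^ k))ˣ) : ZMod (p ^ k)) * F g₀ = F g
  have h1 := hc g g₀
  have h2 := hc g₀ g
  rw [mul_comm g g₀, h2] at h1
  have key : u * F g = ((ψ g : ZMod (p ^ k)) - 1) * F g₀ := by
    rw [hu]; linear_combination h1
  have hvinv : ((v⁻¹ : (ZMod (p ^ k))ˣ) : ZMod (p ^ k)) * u = 1 := by
    rw [← hv, ← Units.val_mul, inv_mul_cancel, Units.val_one]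
  calc (ψ g : ZMod (p ^ k)) * (((v⁻¹ : (ZMod (p ^ k))ˣ) : ZMod (p ^ k)) * F g₀)
        - ((v⁻¹ : (ZMod (p ^ k))ˣ) : ZMod (p ^ k)) * F g₀
      = ((v⁻¹ : (ZMod (p ^ k))ˣ) : ZMod (p ^ k)) * (((ψ g : ZMod (p ^ k)) - 1) * F g₀) := by ring
    _ = ((v⁻¹ : (ZMod (p ^ k))ˣ) : ZMod (p ^ k)) * (u * F g) := by rw [key]
    _ = F g := by rw [← mul_assoc, hvinv, one_mul]
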